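/- Dinkelbach zero-point characterization: for a nonempty finite feasible set F, numerator N : F → ℝ and denominator D : F → ℝ with D(x) > 0 for all x, define F(q) = max_{x∈F} (N(x) − q·D(x)) and q* = max_{x∈F} N(x)/D(x). Then F(q*) = 0, and conversely if F(q) = 0 then q = q*. -/

import Mathlib

/-- Dinkelbach zero-point characterization: F(q*) = 0 where
q* = max N/D, and conversely F(q) = 0 implies q = q*. -/
theorem dinkelbach_zero_point {α : Type*} [Fintype α] [Nonempty α]
    (N D : α → ℝ) (hD : ∀ x, 0 < D x)
    (F : ℝ → ℝ)
    (hF : ∀ q, F q = Finset.univ.sup' Finset.univ_nonempty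
        (fun x => N x - q * D x))
    (qstar : ℝ)
    (hq : qstar = Finset.univ.sup' Finset.univ_nonempty (fun x => N x / D x)) :
    F qstar = 0 ∧ ∀ q : ℝ, F q = 0 → q = qstar := by
  obtain ⟨x0, -, hx0⟩ := Finset.exists_mem_eq_sup' (Finset.univ_nonempty (α := α))
      (fun x => N x / D x)
  have hle : ∀ x : α, N x / D x ≤ qstar := by
    intro x
    rw [hq]
    exact Finset.le_sup' (fun x => N x / D x) (Finset.mem_univ x)
  have hzero : F qstar = 0 := by
    rw [hF]
    apply le_antisymm
    · apply Finset.sup'_le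
      intro x _
      have := hle x
      rw [div_le_iff₀ (hD x)] at this
      linarith
    · have h1 : N x0 - qstar * D x0 = 0 := by
        have : qstar = N x0 / D x0 := by rw [hq, hx0]
        rw [this]
        field_simp [(hD x0).ne']
        ring
      rw [← h1]
      exact Finset.le_sup' (fun x => N x - qstar * D x) (Finset.mem_univ x0)
  refine ⟨hzero, fun q hq0 => ?_⟩
  -- F is strictly antitone
  have hmono : ∀ a b : ℝ, a < b → F b < F a := by
    intro a b hab
    rw [hF, hF]
    obtain ⟨y, -, hy⟩ := Finset.exists_mem_eq_sup' (Finset.univ_nonempty (α := α))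
        (fun x => N x - b * D x)
    rw [hy]
    calc N y - b * D y < N y - a * D y := by nlinarith [hD y]
      _ ≤ _ := Finset.le_sup' (fun x => N x - a * D x) (Finset.mem_univ y)
  rcases lt_trichotomy q qstar with h | h | h
  · have := hmono q qstar h; rw [hq0, hzero] at this; linarith
  · exact h
  · have := hmono qstar q h; rw [hq0, hzero] at this; linarith
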